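/- For any C₁, C₂ ∈ ℝ, the function u(x) = √2 / ( tanh( (√2/2)(x + 2C₁) ) − tan( (√2/2)(−x + 2C₂) ) ) is twice differentiable and satisfies u'' − u'²/(2u) + 2uu' + u³/2 + 1/(2u) = 0 on every interval where (√2/2)(−x + 2C₂) avoids the poles of the tangent (i.e. is not of the form π/2 + kπ) and the denominator tanh((√2/2)(x+2C₁)) − tan((√2/2)(−x+2C₂)) is nonzero. -/

import Mathlib

open Real

private lemma my_hasDerivAt_tanh (x : ℝ) : HasDerivAt Real.tanh (1 - Real.tanh x ^ 2) x := by
  have hc : Real.cosh x ≠ 0 := (Real.cosh_pos x).ne'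
  have h := (Real.hasDerivAt_sinh x).div (Real.hasDerivAt_cosh x) hc
  have heq : Real.tanh = fun y => Real.sinh y / Real.cosh y :=
    funext fun y => Real.tanh_eq_sinh_div_cosh y
  rw [heq]
  refine h.congr_deriv (Eq.symm ?_)
  show 1 - (Real.sinh x / Real.cosh x) ^ 2 = _
  rw [div_pow]
  field_simp

private lemma my_one_div_cos_sq {t : ℝ} (h : Real.cos t ≠ 0) :
    1 / Real.cos t ^ 2 = 1 + Real.tan t ^ 2 := by
  rw [one_div, ← Real.inv_one_add_tan_sq h, inv_inv]

private lemma auxf (s c y : ℝ) :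
    HasDerivAt (fun z => Real.tanh (s / 2 * (z + c)))
      (s / 2 * (1 - Real.tanh (s / 2 * (y + c)) ^ 2)) y := by
  have hin : HasDerivAt (fun z : ℝ => s / 2 * (z + c)) (s / 2 * 1) y :=
    ((hasDerivAt_id y).add_const c).const_mul (s / 2)
  have := (my_hasDerivAt_tanh (s / 2 * (y + c))).comp y hin
  refine this.congr_deriv (Eq.symm ?_)
  ring

private lemma auxg (s c y : ℝ) (h : Real.cos (s / 2 * (-y + c)) ≠ 0) :
    HasDerivAt (fun z => Real.tan (s / 2 * (-z + c)))
      (-(s / 2) * (1 + Real.tan (s / 2 * (-y + c)) ^ 2)) y := by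
  have hin : HasDerivAt (fun z : ℝ => s / 2 * (-z + c)) (s / 2 * (-1)) y :=
    (((hasDerivAt_id y).neg).add_const c).const_mul (s / 2)
  have := (Real.hasDerivAt_tan h).comp y hin
  refine this.congr_deriv (Eq.symm ?_)
  rw [my_one_div_cos_sq h]
  ring

private lemma auxD (s c₁ c₂ y : ℝ) (h : Real.cos (s / 2 * (-y + c₂)) ≠ 0) :
    HasDerivAt (fun z => Real.tanh (s / 2 * (z + c₁)) - Real.tan (s / 2 * (-z + c₂)))
      (s / 2 * (2 - Real.tanh (s / 2 * (y + c₁)) ^ 2 + Real.tan (s / 2 * (-y + c₂)) ^ 2)) y := by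
  have := (auxf s c₁ y).sub (auxg s c₂ y h)
  refine this.congr_deriv (Eq.symm ?_)
  ring

private lemma auxu (s c₁ c₂ y : ℝ) (h : Real.cos (s / 2 * (-y + c₂)) ≠ 0)
    (hd : Real.tanh (s / 2 * (y + c₁)) - Real.tan (s / 2 * (-y + c₂)) ≠ 0) :
    HasDerivAt (fun z => s / (Real.tanh (s / 2 * (z + c₁)) - Real.tan (s / 2 * (-z + c₂))))
      (-(s ^ 2 / 2) * (2 - Real.tanh (s / 2 * (y + c₁)) ^ 2 + Real.tan (s / 2 * (-y + c₂)) ^ 2) /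
        (Real.tanh (s / 2 * (y + c₁)) - Real.tan (s / 2 * (-y + c₂))) ^ 2) y := by
  have := (hasDerivAt_const y s).div (auxD s c₁ c₂ y h) hd
  refine this.congr_deriv (Eq.symm ?_)
  ring

private lemma auxphi (s c₁ c₂ y : ℝ) (h : Real.cos (s / 2 * (-y + c₂)) ≠ 0)
    (hd : Real.tanh (s / 2 * (y + c₁)) - Real.tan (s / 2 * (-y + c₂)) ≠ 0) :
    HasDerivAt (fun z =>
        -(s ^ 2 / 2) * (2 - Real.tanh (s / 2 * (z + c₁)) ^ 2 + Real.tan (s / 2 * (-z + c₂)) ^ 2) /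
          (Real.tanh (s / 2 * (z + c₁)) - Real.tan (s / 2 * (-z + c₂))) ^ 2)
      ((s ^ 3 / 2 *
          (Real.tanh (s / 2 * (y + c₁)) - Real.tanh (s / 2 * (y + c₁)) ^ 3 +
            Real.tan (s / 2 * (-y + c₂)) + Real.tan (s / 2 * (-y + c₂)) ^ 3) *
          (Real.tanh (s / 2 * (y + c₁)) - Real.tan (s / 2 * (-y + c₂))) ^ 2 +
        s ^ 3 / 2 *
          (2 - Real.tanh (s / 2 * (y + c₁)) ^ 2 + Real.tan (s / 2 * (-y + c₂)) ^ 2) ^ 2 *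
          (Real.tanh (s / 2 * (y + c₁)) - Real.tan (s / 2 * (-y + c₂)))) /
        ((Real.tanh (s / 2 * (y + c₁)) - Real.tan (s / 2 * (-y + c₂))) ^ 2) ^ 2) y := by
  have hf2 := (auxf s c₁ y).pow 2
  have hg2 := (auxg s c₂ y h).pow 2
  have hnum := (((hasDerivAt_const y (2 : ℝ)).sub hf2).add hg2).const_mul (-(s ^ 2 / 2))
  have hden := (auxD s c₁ c₂ y h).pow 2
  have := hnum.div hden (pow_ne_zero 2 hd)
  refine this.congr_deriv (Eq.symm ?_)
  simp only [Pi.pow_apply, Pi.sub_apply, Pi.add_apply]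
  push_cast
  ring

private lemma key (s T S : ℝ) (hs : s ^ 2 = 2) (hd : T - S ≠ 0) (hs0 : s ≠ 0) :
    (s^3/2*(T - T^3 + S + S^3)*(T-S)^2 + s^3/2*(2 - T^2 + S^2)^2*(T-S))/((T-S)^2)^2
      - (-(s^2/2) * (2 - T^2 + S^2) / (T-S)^2)^2 / (2*(s/(T-S)))
      + 2*(s/(T-S))*(-(s^2/2) * (2 - T^2 + S^2) / (T-S)^2)
      + (s/(T-S))^3/2 + 1/(2*(s/(T-S))) = 0 := by
  field_simp
  linear_combination ((2 ^ 2 * ((T * (1 - T ^ 2) + S + S ^ 3) * (T - S) + (2 - T ^ 2 + S ^ 2) ^ 2) - (2 - T ^ 2 + S ^ 2) ^ 2 +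
            -(2 ^ 3 * (2 - T ^ 2 + S ^ 2)) + 2 ^ 2) * (s ^ 2 + 2)) * hs

/- The equation u'' − u'²/(2u) + 2uu' + u³/2 + 1/(2u) = 0 is the Painlevé–Gambier XXVII
equation with F = 0; tanh and tan are the real hyperbolic tangent and tangent. -/

/-- for any `C₁, C₂ ∈ ℝ`, the function
`u(x) = √2/(tanh((√2/2)(x + 2C₁)) − tan((√2/2)(−x + 2C₂)))` is twice differentiable and
satisfies `u'' − u'²/(2u) + 2uu' + u³/2 + 1/(2u) = 0` at every point where
`(√2/2)(−x + 2C₂)` is not a pole of the tangent (not of the form `π/2 + kπ`) and the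
denominator is nonzero. -/
theorem statement16 (C₁ C₂ : ℝ) (u : ℝ → ℝ)
    (hu : u = fun x =>
      Real.sqrt 2 /
        (Real.tanh (Real.sqrt 2 / 2 * (x + 2 * C₁)) -
          Real.tan (Real.sqrt 2 / 2 * (-x + 2 * C₂)))) :
    ∀ x : ℝ,
      (∀ k : ℤ, Real.sqrt 2 / 2 * (-x + 2 * C₂) ≠ π / 2 + k * π) →
      Real.tanh (Real.sqrt 2 / 2 * (x + 2 * C₁)) -
        Real.tan (Real.sqrt 2 / 2 * (-x + 2 * C₂)) ≠ 0 →
      DifferentiableAt ℝ u x ∧ DifferentiableAt ℝ (deriv u) x ∧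
      deriv (deriv u) x - (deriv u x) ^ 2 / (2 * u x) + 2 * u x * deriv u x
        + (u x) ^ 3 / 2 + 1 / (2 * u x) = 0 := by
  intro x hk hD
  have hcx : Real.cos (Real.sqrt 2 / 2 * (-x + 2 * C₂)) ≠ 0 := by
    rw [Real.cos_ne_zero_iff]
    intro k hkk
    exact hk k (by rw [hkk]; ring)
  -- pointwise derivative of u
  have hud : ∀ y : ℝ, Real.cos (Real.sqrt 2 / 2 * (-y + 2 * C₂)) ≠ 0 →
      Real.tanh (Real.sqrt 2 / 2 * (y + 2 * C₁)) -
        Real.tan (Real.sqrt 2 / 2 * (-y + 2 * C₂)) ≠ 0 →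
      HasDerivAt u
        (-(Real.sqrt 2 ^ 2 / 2) *
            (2 - Real.tanh (Real.sqrt 2 / 2 * (y + 2 * C₁)) ^ 2 +
              Real.tan (Real.sqrt 2 / 2 * (-y + 2 * C₂)) ^ 2) /
          (Real.tanh (Real.sqrt 2 / 2 * (y + 2 * C₁)) -
            Real.tan (Real.sqrt 2 / 2 * (-y + 2 * C₂))) ^ 2) y := by
    intro y hc hdy
    rw [hu]
    exact auxu (Real.sqrt 2) (2 * C₁) (2 * C₂) y hc hdy
  -- eventual nonvanishing
  have hc1 : Continuous fun y : ℝ => Real.cos (Real.sqrt 2 / 2 * (-y + 2 * C₂)) := by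
    continuity
  have e1 : ∀ᶠ y in nhds x, Real.cos (Real.sqrt 2 / 2 * (-y + 2 * C₂)) ≠ 0 :=
    hc1.continuousAt.eventually_ne hcx
  have e2 : ∀ᶠ y in nhds x,
      Real.tanh (Real.sqrt 2 / 2 * (y + 2 * C₁)) -
        Real.tan (Real.sqrt 2 / 2 * (-y + 2 * C₂)) ≠ 0 :=
    (auxD (Real.sqrt 2) (2 * C₁) (2 * C₂) x hcx).continuousAt.eventually_ne hD
  have hev : deriv u =ᶠ[nhds x] fun y =>
      -(Real.sqrt 2 ^ 2 / 2) *
          (2 - Real.tanh (Real.sqrt 2 / 2 * (y + 2 * C₁)) ^ 2 +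
            Real.tan (Real.sqrt 2 / 2 * (-y + 2 * C₂)) ^ 2) /
        (Real.tanh (Real.sqrt 2 / 2 * (y + 2 * C₁)) -
          Real.tan (Real.sqrt 2 / 2 * (-y + 2 * C₂))) ^ 2 := by
    filter_upwards [e1, e2] with y h1 h2
    exact (hud y h1 h2).deriv
  have hφ := auxphi (Real.sqrt 2) (2 * C₁) (2 * C₂) x hcx hD
  have h1 : DifferentiableAt ℝ u x := (hud x hcx hD).differentiableAt
  have h2 : DifferentiableAt ℝ (deriv u) x :=
    hφ.differentiableAt.congr_of_eventuallyEq hev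
  have h3 : deriv (deriv u) x = _ := hev.deriv_eq.trans hφ.deriv
  have h4 : deriv u x = _ := (hud x hcx hD).deriv
  refine ⟨h1, h2, ?_⟩
  rw [h3, h4, hu]
  exact key (Real.sqrt 2)
    (Real.tanh (Real.sqrt 2 / 2 * (x + 2 * C₁)))
    (Real.tan (Real.sqrt 2 / 2 * (-x + 2 * C₂)))
    (Real.sq_sqrt (by norm_num)) hD
    (by positivity)
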